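/- Let V, W be finite-dimensional complex vector spaces and N ∈ End(W) nilpotent with N^k = 0. Let Q, Q' : W → V be linear maps such that both Q restricted to Ker N and Q' restricted to Ker N are injective. Then there exist g_0, g_1, …, g_{k-1} ∈ End(V) with g_0 invertible such that Σ_{i=0}^{k-1} g_i ∘ Q ∘ N^i = Q'. -/

import Mathlib

/-- Factorization: if `ker f ≤ ker g` then `g` factors through `f` (vector spaces). -/
lemma my_factor {K M V V₂ : Type*} [Field K] [AddCommGroup M] [Module K M]
    [AddCommGroup V] [Module K V] [AddCommGroup V₂] [Module K V₂]
    (f : M →ₗ[K] V) (g : M →ₗ[K] V₂) (hle : LinearMap.ker f ≤ LinearMap.ker g) :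
    ∃ h : V →ₗ[K] V₂, ∀ x, h (f x) = g x := by
  set e := f.quotKerEquivRange
  set gbar : (M ⧸ LinearMap.ker f) →ₗ[K] V₂ := (LinearMap.ker f).liftQ g hle
  obtain ⟨h, hh⟩ := LinearMap.exists_extend (gbar ∘ₗ (e.symm : LinearMap.range f →ₗ[K] _))
  refine ⟨h, fun x => ?_⟩
  have hx : f x ∈ LinearMap.range f := LinearMap.mem_range_self f x
  have : h (f x) = (gbar ∘ₗ (e.symm : LinearMap.range f →ₗ[K] _)) ⟨f x, hx⟩ := by
    rw [← hh]; rfl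
  rw [this]
  simp only [LinearMap.comp_apply, LinearEquiv.coe_coe]
  rw [LinearMap.quotKerEquivRange_symm_apply_image]
  simp [gbar]

/-- Two injective maps from a f.d. space into a f.d. space differ by an automorphism. -/
lemma my_extend_equiv {K M V : Type*} [Field K] [AddCommGroup M] [Module K M]
    [FiniteDimensional K M] [AddCommGroup V] [Module K V] [FiniteDimensional K V]
    (A B : M →ₗ[K] V) (hA : Function.Injective A) (hB : Function.Injective B) :
    ∃ e : V ≃ₗ[K] V, ∀ x, e (A x) = B x := by
  set p := LinearMap.range A
  set q := LinearMap.range B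
  obtain ⟨p', hp⟩ := p.exists_isCompl
  obtain ⟨q', hq⟩ := q.exists_isCompl
  have hdim : Module.finrank K p = Module.finrank K q := by
    rw [LinearMap.finrank_range_of_inj hA, LinearMap.finrank_range_of_inj hB]
  have hdim' : Module.finrank K p' = Module.finrank K q' := by
    have h1 := Submodule.finrank_add_eq_of_isCompl hp
    have h2 := Submodule.finrank_add_eq_of_isCompl hq
    omega
  set φ : (p : Submodule K V) ≃ₗ[K] q :=
    (LinearEquiv.ofInjective A hA).symm.trans (LinearEquiv.ofInjective B hB)
  set ψ : (p' : Submodule K V) ≃ₗ[K] q' := LinearEquiv.ofFinrankEq _ _ hdim'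
  set e : V ≃ₗ[K] V :=
    (Submodule.prodEquivOfIsCompl p p' hp).symm.trans
      ((φ.prodCongr ψ).trans (Submodule.prodEquivOfIsCompl q q' hq))
  refine ⟨e, fun x => ?_⟩
  have h1 : (Submodule.prodEquivOfIsCompl p p' hp).symm (A x)
      = (⟨A x, LinearMap.mem_range_self A x⟩, 0) := by
    rw [LinearEquiv.symm_apply_eq]
    simp [Submodule.coe_prodEquivOfIsCompl']
  simp only [e, LinearEquiv.trans_apply, h1, LinearEquiv.prodCongr_apply]
  have hφ : φ ⟨A x, LinearMap.mem_range_self A x⟩ = ⟨B x, LinearMap.mem_range_self B x⟩ := by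
    have : (LinearEquiv.ofInjective A hA).symm ⟨A x, LinearMap.mem_range_self A x⟩ = x := by
      rw [LinearEquiv.symm_apply_eq]
      exact Subtype.ext (LinearEquiv.ofInjective_apply A x).symm
    simp only [φ, LinearEquiv.trans_apply, this]
    rfl
  simp [hφ, Submodule.coe_prodEquivOfIsCompl']

/-- transitivity of the truncated gauge group action on homomorphisms
whose restriction to `Ker N` is injective: if `N^k = 0` and `Q, Q' : W → V` both
restrict injectively to `Ker N`, then there are `g₀,…,g_{k-1} ∈ End(V)` with `g₀`
invertible such that `Σ_{i<k} gᵢ ∘ Q ∘ Nⁱ = Q'`. -/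
theorem stmt2
    (V W : Type*) [AddCommGroup V] [Module ℂ V] [FiniteDimensional ℂ V]
    [AddCommGroup W] [Module ℂ W] [FiniteDimensional ℂ W]
    (k : ℕ) (hk : 0 < k) (N : Module.End ℂ W) (hN : N ^ k = 0)
    (Q Q' : W →ₗ[ℂ] V)
    (hQ : Function.Injective (Q ∘ₗ (LinearMap.ker N).subtype))
    (hQ' : Function.Injective (Q' ∘ₗ (LinearMap.ker N).subtype)) :
    ∃ g : ℕ → Module.End ℂ V, IsUnit (g 0) ∧
      ∑ i ∈ Finset.range k, (g i) ∘ₗ Q ∘ₗ (N ^ i : Module.End ℂ W) = Q' := by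
  -- `Q` kills no nonzero element of `ker N`
  have hQker : ∀ w : W, N w = 0 → Q w = 0 → w = 0 := by
    intro w hw hQw
    have : (Q ∘ₗ (LinearMap.ker N).subtype) ⟨w, hw⟩
        = (Q ∘ₗ (LinearMap.ker N).subtype) 0 := by simpa using hQw
    simpa using congrArg Subtype.val (hQ this)
  -- main induction
  have key : ∀ j : ℕ, ∃ g : ℕ → Module.End ℂ V, IsUnit (g 0) ∧
      ∀ w ∈ LinearMap.ker (N ^ (j + 1)),
        (∑ i ∈ Finset.range (j + 1), (g i) ∘ₗ Q ∘ₗ (N ^ i : Module.End ℂ W)) w = Q' w := by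
    intro j
    induction j with
    | zero =>
        obtain ⟨e, he⟩ := my_extend_equiv (Q ∘ₗ (LinearMap.ker N).subtype)
          (Q' ∘ₗ (LinearMap.ker N).subtype) hQ hQ'
        refine ⟨fun _ => (e : V →ₗ[ℂ] V), ?_, ?_⟩
        · exact ⟨⟨(e : V →ₗ[ℂ] V), (e.symm : V →ₗ[ℂ] V),
            by ext x; simp [Module.End.mul_apply], by ext x; simp [Module.End.mul_apply]⟩, rfl⟩
        · intro w hw
          have hw' : w ∈ LinearMap.ker N := by simpa using hw
          have := he ⟨w, hw'⟩
          simpa using this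
    | succ j ih =>
        obtain ⟨g, hg0, hg⟩ := ih
        set S : W →ₗ[ℂ] V :=
          ∑ i ∈ Finset.range (j + 1), (g i) ∘ₗ Q ∘ₗ (N ^ i : Module.End ℂ W) with hS
        set R : W →ₗ[ℂ] V := Q' - S with hRdef
        have hR : ∀ w ∈ LinearMap.ker (N ^ (j + 1)), R w = 0 := by
          intro w hw
          have := hg w hw
          simp [hRdef, this]
        -- factor `R` on `ker N^(j+2)` through `Q ∘ N^(j+1)`
        set f : (LinearMap.ker (N ^ (j + 2)) : Submodule ℂ W) →ₗ[ℂ] V :=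
          Q ∘ₗ (N ^ (j + 1) : Module.End ℂ W) ∘ₗ (LinearMap.ker (N ^ (j + 2))).subtype with hf
        set t : (LinearMap.ker (N ^ (j + 2)) : Submodule ℂ W) →ₗ[ℂ] V :=
          R ∘ₗ (LinearMap.ker (N ^ (j + 2))).subtype with ht
        have hle : LinearMap.ker f ≤ LinearMap.ker t := by
          intro x hx
          have hx0 : Q ((N ^ (j + 1) : Module.End ℂ W) (x : W)) = 0 := hx
          have hpow : ∀ v : W, N ((N ^ (j + 1) : Module.End ℂ W) v)
              = (N ^ (j + 2) : Module.End ℂ W) v := by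
            intro v; rw [pow_succ' N (j + 1)]; rfl
          have hker : N ((N ^ (j + 1) : Module.End ℂ W) (x : W)) = 0 := by
            rw [hpow]; exact x.2
          have hNx : (N ^ (j + 1) : Module.End ℂ W) (x : W) = 0 := hQker _ hker hx0
          have : (x : W) ∈ LinearMap.ker (N ^ (j + 1)) := hNx
          exact hR _ this
        obtain ⟨h, hh⟩ := my_factor f t hle
        refine ⟨Function.update g (j + 1) h, ?_, ?_⟩
        · rwa [Function.update_of_ne (by omega)]
        · intro w hw
          rw [Finset.sum_range_succ]
          have hsum : ∀ i ∈ Finset.range (j + 1),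
              (Function.update g (j + 1) h i) ∘ₗ Q ∘ₗ (N ^ i : Module.End ℂ W)
                = (g i) ∘ₗ Q ∘ₗ (N ^ i : Module.End ℂ W) := by
            intro i hi
            rw [Function.update_of_ne (by simp at hi; omega)]
          rw [Finset.sum_congr rfl hsum]
          have h1 : (Function.update g (j + 1) h (j + 1)) = h := Function.update_self _ _ _
          have h2 : ((Function.update g (j + 1) h (j + 1)) ∘ₗ Q
              ∘ₗ (N ^ (j + 1) : Module.End ℂ W)) w = h (f ⟨w, hw⟩) := by
            rw [h1]; rfl
          have h3 := hh ⟨w, hw⟩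
          have h4 : t ⟨w, hw⟩ = R w := rfl
          simp only [LinearMap.add_apply, h2, h3, h4, hRdef, LinearMap.sub_apply]
          abel
  obtain ⟨g, hg0, hg⟩ := key (k - 1)
  have hk1 : k - 1 + 1 = k := Nat.succ_pred_eq_of_pos hk
  refine ⟨g, hg0, ?_⟩
  ext w
  have hw : w ∈ LinearMap.ker (N ^ (k - 1 + 1)) := by
    rw [hk1, hN]; simp
  have := hg w hw
  rwa [hk1] at this
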